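/- Let m, N ≥ 1, ξ = (ξ_1,…,ξ_m) ∈ ℂ^m with 1, ξ_1, …, ξ_m linearly independent over ℚ̄, let A ∈ GL_m(ℚ̄), and define ξ' = (ξ'_1,…,ξ'_m) by ξ' = Aξ. If the inequality dim R ≥ (2 − (m−1)/(N+m−1)) · dim(F ∩ R), with equality iff R = {0} or R = ℂ^Ω, holds for the data (m, N, ξ) for every subspace R of ℂ^Ω defined over ℚ̄ of a given dimension ρ, then it also holds for the data (m, N, ξ') for every subspace R of ℂ^Ω defined over ℚ̄ of dimension ρ. -/

import Mathlib

open Polynomial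

noncomputable section

/-- The weight `|κ| = κ₁ + … + κ_m` of a multi-index. -/
def wt {m : ℕ} (κ : Fin m → ℕ) : ℕ := ∑ j, κ j

/-- `κ ∈ Ω`, i.e. `N - 1 ≤ |κ| ≤ N`. -/
def inOmega (m N : ℕ) (κ : Fin m → ℕ) : Prop := N - 1 ≤ wt κ ∧ wt κ ≤ N

/-- `κ - e_j` (only meaningful when `κ j ≥ 1`; guarded at use sites). -/
def sub1 {m : ℕ} (κ : Fin m → ℕ) (j : Fin m) : Fin m → ℕ :=
  Function.update κ j (κ j - 1)

/-- The canonical basis vector `E_κ`. -/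
def Evec {m : ℕ} (κ : Fin m → ℕ) : (Fin m → ℕ) → ℂ := fun μ => if μ = κ then 1 else 0

/-- The vector `Z_κ = E_κ + ∑_j ξ_j E_{κ-e_j}` (with `E_{κ-e_j} = 0` when `κ_j = 0`). -/
def Zvec {m : ℕ} (ξ : Fin m → ℂ) (κ : Fin m → ℕ) : (Fin m → ℕ) → ℂ :=
  Evec κ + ∑ j : Fin m, (if κ j = 0 then 0 else ξ j • Evec (sub1 κ j))

/-- `ℂ^Ω`, realized as the space of families supported on
`Ω = {κ : N-1 ≤ |κ| ≤ N}` (the span of the `E_κ`, `κ ∈ Ω`). -/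
def OmegaSpace (m N : ℕ) : Submodule ℂ ((Fin m → ℕ) → ℂ) :=
  Submodule.span ℂ {v | ∃ κ, inOmega m N κ ∧ v = Evec κ}

/-- `F = Span{Z_κ : κ ∈ Θ} ⊆ ℂ^Ω`, where `Θ = {κ : |κ| = N}`. -/
def Fspace (m N : ℕ) (ξ : Fin m → ℂ) : Submodule ℂ ((Fin m → ℕ) → ℂ) :=
  Submodule.span ℂ {v | ∃ κ, wt κ = N ∧ v = Zvec ξ κ}

/-- A subspace of `ℂ^Ω` is defined over `ℚ̄` if it is spanned by vectors all of whose
coordinates are algebraic numbers (equivalently, it has a `ℂ`-basis of such vectors). -/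
def DefinedOverQbar {m : ℕ} (R : Submodule ℂ ((Fin m → ℕ) → ℂ)) : Prop :=
  ∃ s : Set ((Fin m → ℕ) → ℂ), (∀ v ∈ s, ∀ κ, IsAlgebraic ℚ (v κ)) ∧
    Submodule.span ℂ s = R

/-- `1, ξ₁, …, ξ_m` are linearly independent over `ℚ̄`. -/
def LinIndepOverQbar (m : ℕ) (ξ : Fin m → ℂ) : Prop :=
  ∀ (a : ℂ) (c : Fin m → ℂ), IsAlgebraic ℚ a → (∀ j, IsAlgebraic ℚ (c j)) →
    a + ∑ j : Fin m, c j * ξ j = 0 → a = 0 ∧ ∀ j, c j = 0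
/-- The dimension inequality of Theorem 5.1, together with its case of equality:
`dim R ≥ (2 - (m-1)/(N+m-1)) · dim(F ∩ R)`, with equality iff `R = {0}` or `R = ℂ^Ω`. -/
def RatIneq (m N : ℕ) (ξ : Fin m → ℂ) (R : Submodule ℂ ((Fin m → ℕ) → ℂ)) : Prop :=
  (2 - ((m : ℝ) - 1) / ((N : ℝ) + (m : ℝ) - 1)) *
      (Module.finrank ℂ ↥(Fspace m N ξ ⊓ R) : ℝ) ≤ (Module.finrank ℂ ↥R : ℝ) ∧
  ((Module.finrank ℂ ↥R : ℝ) =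
      (2 - ((m : ℝ) - 1) / ((N : ℝ) + (m : ℝ) - 1)) *
        (Module.finrank ℂ ↥(Fspace m N ξ ⊓ R) : ℝ) ↔
    R = ⊥ ∨ R = OmegaSpace m N)

section Aux

open MvPolynomial

variable {m : ℕ}

/-! ### Multi-index bookkeeping -/

def toF (κ : Fin m → ℕ) : Fin m →₀ ℕ := Finsupp.equivFunOnFinite.symm κ

@[simp] lemma toF_coe (κ : Fin m → ℕ) : ⇑(toF κ) = κ := rfl
@[simp] lemma toF_apply (κ : Fin m → ℕ) (j : Fin m) : toF κ j = κ j := rfl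
@[simp] lemma toF_coeFn (d : Fin m →₀ ℕ) : toF ⇑d = d := Finsupp.equivFunOnFinite_symm_coe d

lemma degree_toF (κ : Fin m → ℕ) : (toF κ).degree = wt κ :=
  Finset.sum_subset (Finset.subset_univ _)
    (fun _ _ hx => Finsupp.notMem_support_iff.mp hx)

def monX (lam : Fin m → ℕ) : MvPolynomial (Fin m) ℂ := monomial (toF lam) 1

lemma toF_sub_single {κ : Fin m → ℕ} {j : Fin m} :
    toF κ - Finsupp.single j 1 = toF (sub1 κ j) := by
  ext i
  rw [Finsupp.tsub_apply]
  rcases eq_or_ne i j with rfl | hij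
  · simp [sub1]
  · simp [sub1, Finsupp.single_eq_of_ne' (Ne.symm hij), Function.update_of_ne hij]

/-! ### The pairing between polynomials and families -/

lemma pair_sum_eq (f : (Fin m → ℕ) → ℂ) (p : MvPolynomial (Fin m) ℂ)
    (T : Finset (Fin m →₀ ℕ)) (hT : p.support ⊆ T) :
    ∑ μ ∈ p.support, coeff μ p * f ⇑μ = ∑ μ ∈ T, coeff μ p * f ⇑μ :=
  Finset.sum_subset hT (fun x _ hx => by rw [MvPolynomial.notMem_support_iff.mp hx, zero_mul])

def pairFun (f : (Fin m → ℕ) → ℂ) (p : MvPolynomial (Fin m) ℂ) : ℂ :=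
  ∑ μ ∈ p.support, coeff μ p * f ⇑μ

lemma pairFun_add (f : (Fin m → ℕ) → ℂ) (p q : MvPolynomial (Fin m) ℂ) :
    pairFun f (p + q) = pairFun f p + pairFun f q := by
  classical
  rw [pairFun, pairFun, pairFun,
      pair_sum_eq f (p + q) (p.support ∪ q.support) MvPolynomial.support_add,
      pair_sum_eq f p (p.support ∪ q.support) Finset.subset_union_left,
      pair_sum_eq f q (p.support ∪ q.support) Finset.subset_union_right,
      ← Finset.sum_add_distrib]
  exact Finset.sum_congr rfl fun μ _ => by rw [MvPolynomial.coeff_add, add_mul]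

lemma pairFun_smul (f : (Fin m → ℕ) → ℂ) (c : ℂ) (p : MvPolynomial (Fin m) ℂ) :
    pairFun f (c • p) = c * pairFun f p := by
  rw [pairFun, pairFun, pair_sum_eq f (c • p) p.support MvPolynomial.support_smul, Finset.mul_sum]
  exact Finset.sum_congr rfl fun μ _ => by rw [MvPolynomial.coeff_smul, smul_eq_mul, mul_assoc]

def pairL (f : (Fin m → ℕ) → ℂ) : MvPolynomial (Fin m) ℂ →ₗ[ℂ] ℂ where
  toFun p := pairFun f p
  map_add' p q := pairFun_add f p q
  map_smul' c p := by
    simp only [RingHom.id_apply, smul_eq_mul]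
    exact pairFun_smul f c p

lemma pairL_apply (f : (Fin m → ℕ) → ℂ) (p : MvPolynomial (Fin m) ℂ) :
    pairL f p = ∑ μ ∈ p.support, coeff μ p * f ⇑μ := rfl

lemma pairL_monomial (f : (Fin m → ℕ) → ℂ) (d : Fin m →₀ ℕ) (c : ℂ) :
    pairL f (monomial d c) = c * f ⇑d := by
  classical
  rcases eq_or_ne c 0 with rfl | h
  · simp [pairL_apply]
  · rw [pairL_apply, MvPolynomial.support_monomial, if_neg h, Finset.sum_singleton, MvPolynomial.coeff_monomial,
      if_pos rfl]

lemma pairL_monX (f : (Fin m → ℕ) → ℂ) (lam : Fin m → ℕ) :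
    pairL f (monX lam) = f lam := by
  rw [monX, pairL_monomial, toF_coe, one_mul]

lemma sum_support_eq (p : MvPolynomial (Fin m) ℂ) (G : MvPolynomial (Fin m) ℂ →ₗ[ℂ] ℂ) :
    ∑ d ∈ p.support, coeff d p * G (monomial d 1) = G p := by
  conv_rhs => rw [← MvPolynomial.support_sum_monomial_coeff p]
  rw [map_sum]
  refine Finset.sum_congr rfl fun d _ => ?_
  rw [← smul_eq_mul, ← map_smul]
  congr 1
  rw [MvPolynomial.smul_monomial, smul_eq_mul, mul_one]

lemma pairL_add_f (f g : (Fin m → ℕ) → ℂ) (p : MvPolynomial (Fin m) ℂ) :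
    pairL (f + g) p = pairL f p + pairL g p := by
  simp only [pairL_apply, Pi.add_apply, mul_add, Finset.sum_add_distrib]

lemma pairL_zero_f (p : MvPolynomial (Fin m) ℂ) : pairL (0 : (Fin m → ℕ) → ℂ) p = 0 := by
  simp [pairL_apply]

lemma pairL_smul_f (c : ℂ) (f : (Fin m → ℕ) → ℂ) (p : MvPolynomial (Fin m) ℂ) :
    pairL (c • f) p = c * pairL f p := by
  simp only [pairL_apply, Pi.smul_apply, smul_eq_mul, Finset.mul_sum]
  exact Finset.sum_congr rfl fun μ _ => by ring

lemma pairL_sum_f {ι : Type*} (s : Finset ι) (f : ι → (Fin m → ℕ) → ℂ)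
    (p : MvPolynomial (Fin m) ℂ) :
    pairL (∑ i ∈ s, f i) p = ∑ i ∈ s, pairL (f i) p := by
  classical
  induction s using Finset.induction_on with
  | empty => simp [pairL_zero_f]
  | insert a s h ih =>
      rw [Finset.sum_insert h, Finset.sum_insert h, pairL_add_f, ih]

lemma pairL_Evec (κ : Fin m → ℕ) (p : MvPolynomial (Fin m) ℂ) :
    pairL (Evec κ) p = coeff (toF κ) p := by
  classical
  rw [pairL_apply]
  have h : ∀ μ ∈ p.support, coeff μ p * Evec κ ⇑μ = if μ = toF κ then coeff μ p else 0 := by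
    intro μ _
    rcases eq_or_ne μ (toF κ) with rfl | h
    · simp [Evec]
    · have h2 : ⇑μ ≠ κ := fun e => h (by rw [← e, toF_coeFn])
      simp [Evec, h2, h]
  rw [Finset.sum_congr rfl h, Finset.sum_ite_eq' p.support (toF κ) (fun μ => coeff μ p)]
  by_cases hmem : toF κ ∈ p.support
  · rw [if_pos hmem]
  · rw [if_neg hmem, MvPolynomial.notMem_support_iff.mp hmem]

/-! ### The substitution endomorphism -/

def sigmaB (B : Matrix (Fin m) (Fin m) ℂ) :
    MvPolynomial (Fin m) ℂ →ₐ[ℂ] MvPolynomial (Fin m) ℂ :=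
  aeval (fun k => ∑ j, MvPolynomial.C (B k j) * MvPolynomial.X j)

lemma sigmaB_comp (B B' : Matrix (Fin m) (Fin m) ℂ) :
    (sigmaB B').comp (sigmaB B) = sigmaB (B * B') := by
  rw [sigmaB, sigmaB, sigmaB, MvPolynomial.comp_aeval]
  congr 1
  funext k
  rw [map_sum]
  simp only [map_mul, MvPolynomial.aeval_C, MvPolynomial.aeval_X, algebraMap_eq]
  simp only [Finset.mul_sum]
  rw [Finset.sum_comm]
  refine Finset.sum_congr rfl fun i _ => ?_
  rw [Matrix.mul_apply, map_sum MvPolynomial.C, Finset.sum_mul]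
  exact Finset.sum_congr rfl fun j _ => by rw [← mul_assoc, ← MvPolynomial.C_mul]

lemma sigmaB_one : sigmaB (1 : Matrix (Fin m) (Fin m) ℂ) = AlgHom.id ℂ _ := by
  rw [sigmaB, ← MvPolynomial.aeval_X_left (R := ℂ) (σ := Fin m)]
  congr 1
  funext k
  simp [Matrix.one_apply, apply_ite MvPolynomial.C, ite_mul, Finset.sum_ite_eq]

def PhiB (B : Matrix (Fin m) (Fin m) ℂ) :
    ((Fin m → ℕ) → ℂ) →ₗ[ℂ] ((Fin m → ℕ) → ℂ) where
  toFun f := fun lam => pairL f (sigmaB B (monX lam))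
  map_add' f g := funext fun lam => pairL_add_f f g _
  map_smul' c f := funext fun lam => pairL_smul_f c f _

lemma PhiB_apply (B : Matrix (Fin m) (Fin m) ℂ) (f : (Fin m → ℕ) → ℂ) (lam : Fin m → ℕ) :
    PhiB B f lam = pairL f (sigmaB B (monX lam)) := rfl

lemma PhiB_comp (B B' : Matrix (Fin m) (Fin m) ℂ) :
    PhiB B ∘ₗ PhiB B' = PhiB (B * B') := by
  refine LinearMap.ext fun f => funext fun lam => ?_
  have h1 : (PhiB B ∘ₗ PhiB B') f lam
      = ∑ d ∈ (sigmaB B (monX lam)).support, coeff d (sigmaB B (monX lam)) *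
          ((pairL f).comp (sigmaB B').toLinearMap) (monomial d 1) := by
    rw [LinearMap.comp_apply, PhiB_apply, pairL_apply]
    refine Finset.sum_congr rfl fun d _ => ?_
    congr 1
    rw [LinearMap.comp_apply, AlgHom.toLinearMap_apply, PhiB_apply]
    congr 2
    rw [monX, toF_coeFn]
  rw [h1, sum_support_eq]
  rw [LinearMap.comp_apply, AlgHom.toLinearMap_apply, PhiB_apply]
  refine congrArg (pairL f) ?_
  exact (AlgHom.congr_fun (sigmaB_comp B B') (monX lam))

lemma PhiB_one : PhiB (1 : Matrix (Fin m) (Fin m) ℂ) = LinearMap.id := by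
  refine LinearMap.ext fun f => funext fun lam => ?_
  rw [PhiB_apply, sigmaB_one, AlgHom.coe_id, id_eq, pairL_monX, LinearMap.id_apply]

/-! ### Homogeneity -/

lemma isHomogeneous_sigmaB_monX (B : Matrix (Fin m) (Fin m) ℂ) (lam : Fin m → ℕ) :
    (sigmaB B (monX lam)).IsHomogeneous (wt lam) := by
  have h := (MvPolynomial.isHomogeneous_monomial (1 : ℂ) (degree_toF lam)).aeval
      (fun k => ∑ j, MvPolynomial.C (B k j) * MvPolynomial.X j)
      (n := 1)
      (fun k => IsHomogeneous.sum _ _ _ fun j _ => MvPolynomial.isHomogeneous_C_mul_X _ _)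
  simpa [one_mul, sigmaB, monX] using h

lemma coeff_sigmaB_monX_eq_zero (B : Matrix (Fin m) (Fin m) ℂ) {κ lam : Fin m → ℕ}
    (h : wt κ ≠ wt lam) :
    coeff (toF κ) (sigmaB B (monX lam)) = 0 :=
  (isHomogeneous_sigmaB_monX B lam).coeff_eq_zero (by rw [degree_toF]; exact h)

/-! ### The finite set of multi-indices of given weight -/

def Wset (m d : ℕ) : Finset (Fin m → ℕ) :=
  ((Finset.univ : Finset (Fin m → Fin (d+1))).image fun g j => (g j : ℕ)).filter
    fun κ => wt κ = d

lemma mem_Wset {m d : ℕ} {κ : Fin m → ℕ} : κ ∈ Wset m d ↔ wt κ = d := by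
  constructor
  · exact fun h => (Finset.mem_filter.mp h).2
  · intro h
    have hb : ∀ j, κ j < d + 1 := by
      intro j
      have : κ j ≤ wt κ := Finset.single_le_sum (f := κ)
        (fun i _ => Nat.zero_le _) (Finset.mem_univ j)
      omega
    exact Finset.mem_filter.mpr
      ⟨Finset.mem_image.mpr ⟨fun j => ⟨κ j, hb j⟩, Finset.mem_univ _, rfl⟩, h⟩

lemma eq_sum_Evec (f : (Fin m → ℕ) → ℂ) (d : ℕ) (h : ∀ lam, f lam ≠ 0 → wt lam = d) :
    f = ∑ lam ∈ Wset m d, f lam • Evec lam := by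
  classical
  funext μ
  rw [Finset.sum_apply]
  by_cases hμ : wt μ = d
  · rw [Finset.sum_eq_single μ]
    · simp [Evec]
    · intro lam _ hne
      have : μ ≠ lam := Ne.symm hne
      simp [Evec, this]
    · intro h'
      exact absurd (mem_Wset.mpr hμ) h'
  · have hf : f μ = 0 := by
      by_contra hne
      exact hμ (h μ hne)
    rw [hf]
    symm
    refine Finset.sum_eq_zero fun lam hlam => ?_
    have : μ ≠ lam := fun e => hμ (by rw [e]; exact mem_Wset.mp hlam)
    simp [Evec, this]

/-! ### Expansion of coefficients of substituted polynomials -/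

lemma sum_vanish_ext {α : Type*} [DecidableEq α] (S T : Finset α) (F : α → ℂ)
    (h1 : ∀ a ∈ S, a ∉ T → F a = 0) (h2 : ∀ a ∈ T, a ∉ S → F a = 0) :
    ∑ a ∈ S, F a = ∑ a ∈ T, F a := by
  rw [Finset.sum_subset (Finset.subset_union_left : S ⊆ S ∪ T)
    (fun x hx hxs => h2 x ((Finset.mem_union.mp hx).resolve_left hxs) hxs)]
  rw [Finset.sum_subset (Finset.subset_union_right : T ⊆ S ∪ T)
    (fun x hx hxt => h1 x ((Finset.mem_union.mp hx).resolve_right hxt) hxt)]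

lemma coeff_sigmaB_expand {N : ℕ} (B : Matrix (Fin m) (Fin m) ℂ) {κ : Fin m → ℕ}
    (hκ : wt κ = N) (q : MvPolynomial (Fin m) ℂ) :
    coeff (toF κ) (sigmaB B q)
      = ∑ μ ∈ Wset m N, coeff (toF κ) (sigmaB B (monX μ)) * coeff (toF μ) q := by
  classical
  have h1 : coeff (toF κ) (sigmaB B q)
      = ∑ d ∈ q.support, coeff d q * coeff (toF κ) (sigmaB B (monomial d 1)) :=
    (sum_support_eq q ((MvPolynomial.lcoeff ℂ (toF κ)).comp (sigmaB B).toLinearMap)).symm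
  have h2 : ∑ μ ∈ q.support.image (fun d : Fin m →₀ ℕ => ⇑d),
        coeff (toF μ) q * coeff (toF κ) (sigmaB B (monX μ))
      = ∑ d ∈ q.support, coeff d q * coeff (toF κ) (sigmaB B (monomial d 1)) := by
    rw [Finset.sum_image (fun x _ y _ hxy => DFunLike.coe_injective hxy)]
    refine Finset.sum_congr rfl fun d _ => ?_
    rw [toF_coeFn]
    congr 2
    rw [monX, toF_coeFn]
  rw [h1, ← h2]
  rw [sum_vanish_ext]
  · exact Finset.sum_congr rfl fun μ _ => mul_comm _ _
  · intro μ _ hμ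
    have hw : wt μ ≠ N := fun e => hμ (mem_Wset.mpr e)
    rw [coeff_sigmaB_monX_eq_zero B (by rw [hκ]; exact fun e => hw e.symm), mul_zero]
  · intro μ _ hμ
    have : toF μ ∉ q.support := by
      intro hc
      exact hμ (Finset.mem_image.mpr ⟨toF μ, hc, toF_coe μ⟩)
    rw [MvPolynomial.notMem_support_iff.mp this, zero_mul]

/-! ### The linear form `ℓ_ξ` and the vectors `Z_κ` -/

def Lf (ζ : Fin m → ℂ) : MvPolynomial (Fin m) ℂ := ∑ j, MvPolynomial.C (ζ j) * MvPolynomial.X j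

lemma coeff_Lf_mul (ζ : Fin m → ℂ) (κ : Fin m → ℕ) (p : MvPolynomial (Fin m) ℂ) :
    coeff (toF κ) (Lf ζ * p)
      = ∑ j, if κ j = 0 then 0 else ζ j * coeff (toF (sub1 κ j)) p := by
  classical
  rw [Lf, Finset.sum_mul, MvPolynomial.coeff_sum]
  refine Finset.sum_congr rfl fun j _ => ?_
  rw [mul_assoc, MvPolynomial.coeff_C_mul, MvPolynomial.coeff_X_mul']
  by_cases hj : κ j = 0
  · rw [if_pos hj, if_neg, mul_zero]
    simp [Finsupp.mem_support_iff, hj]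
  · rw [if_neg hj, if_pos, toF_sub_single]
    simp [Finsupp.mem_support_iff, hj]

lemma pairL_Zvec (ξ : Fin m → ℂ) (κ : Fin m → ℕ) (p : MvPolynomial (Fin m) ℂ) :
    pairL (Zvec ξ κ) p = coeff (toF κ) p + coeff (toF κ) (Lf ξ * p) := by
  classical
  rw [Zvec, pairL_add_f, pairL_Evec, pairL_sum_f, coeff_Lf_mul]
  congr 1
  refine Finset.sum_congr rfl fun j _ => ?_
  by_cases hj : κ j = 0
  · rw [if_pos hj, if_pos hj, pairL_zero_f]
  · rw [if_neg hj, if_neg hj, pairL_smul_f, pairL_Evec]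

lemma Zvec_apply_coeff (ξ : Fin m → ℂ) (κ lam : Fin m → ℕ) :
    Zvec ξ κ lam = coeff (toF κ) ((1 + Lf ξ) * monX lam) := by
  rw [← pairL_monX (Zvec ξ κ) lam, pairL_Zvec, add_mul, one_mul, MvPolynomial.coeff_add]

/-! ### Transport of the spaces `F` and `ℂ^Ω` -/

lemma PhiB_Zvec {N : ℕ} (B : Matrix (Fin m) (Fin m) ℂ) (ξ ξ' : Fin m → ℂ)
    (hB : sigmaB B (Lf ξ') = Lf ξ) {κ : Fin m → ℕ} (hκ : wt κ = N) :
    PhiB B (Zvec ξ κ)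
      = ∑ μ ∈ Wset m N, coeff (toF κ) (sigmaB B (monX μ)) • Zvec ξ' μ := by
  funext lam
  rw [PhiB_apply, pairL_Zvec]
  have h : coeff (toF κ) (sigmaB B (monX lam)) + coeff (toF κ) (Lf ξ * sigmaB B (monX lam))
      = coeff (toF κ) (sigmaB B ((1 + Lf ξ') * monX lam)) := by
    rw [map_mul, map_add, map_one, hB, add_mul, one_mul, MvPolynomial.coeff_add]
  rw [h, coeff_sigmaB_expand B hκ, Finset.sum_apply]
  refine Finset.sum_congr rfl fun μ _ => ?_
  rw [Pi.smul_apply, smul_eq_mul, Zvec_apply_coeff]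

lemma PhiB_map_F_le {N : ℕ} (B : Matrix (Fin m) (Fin m) ℂ) (ξ ξ' : Fin m → ℂ)
    (hB : sigmaB B (Lf ξ') = Lf ξ) :
    Submodule.map (PhiB B) (Fspace m N ξ) ≤ Fspace m N ξ' := by
  rw [Fspace, Submodule.map_span, Submodule.span_le]
  rintro _ ⟨v, ⟨κ, hκ, rfl⟩, rfl⟩
  rw [PhiB_Zvec B ξ ξ' hB hκ]
  exact Submodule.sum_mem _ fun μ hμ => Submodule.smul_mem _ _
    (Submodule.subset_span ⟨μ, mem_Wset.mp hμ, rfl⟩)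

lemma PhiB_Evec (B : Matrix (Fin m) (Fin m) ℂ) (κ : Fin m → ℕ) :
    PhiB B (Evec κ)
      = ∑ lam ∈ Wset m (wt κ), coeff (toF κ) (sigmaB B (monX lam)) • Evec lam := by
  have h : ∀ lam, PhiB B (Evec κ) lam ≠ 0 → wt lam = wt κ := by
    intro lam hne
    rw [PhiB_apply, pairL_Evec] at hne
    by_contra hw
    exact hne (coeff_sigmaB_monX_eq_zero B (fun e => hw e.symm))
  rw [eq_sum_Evec (PhiB B (Evec κ)) (wt κ) h]
  exact Finset.sum_congr rfl fun lam _ => by rw [PhiB_apply, pairL_Evec]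

lemma PhiB_map_Omega_le {N : ℕ} (B : Matrix (Fin m) (Fin m) ℂ) :
    Submodule.map (PhiB B) (OmegaSpace m N) ≤ OmegaSpace m N := by
  rw [OmegaSpace, Submodule.map_span, Submodule.span_le]
  rintro _ ⟨v, ⟨κ, hκ, rfl⟩, rfl⟩
  rw [PhiB_Evec]
  refine Submodule.sum_mem _ fun lam hlam => Submodule.smul_mem _ _
    (Submodule.subset_span ⟨lam, ?_, rfl⟩)
  have hw := mem_Wset.mp hlam
  exact ⟨by show N - 1 ≤ wt lam; rw [hw]; exact hκ.1,
    by show wt lam ≤ N; rw [hw]; exact hκ.2⟩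

/-! ### Algebraicity -/

def coeffsIn (p : MvPolynomial (Fin m) ℂ) : Prop :=
  ∀ d, coeff d p ∈ integralClosure ℚ ℂ

lemma coeffsIn_one : coeffsIn (1 : MvPolynomial (Fin m) ℂ) := by
  intro d
  classical
  rw [MvPolynomial.coeff_one]
  split <;> simp [Subalgebra.one_mem, Subalgebra.zero_mem]

lemma coeffsIn_mul {p q : MvPolynomial (Fin m) ℂ} (hp : coeffsIn p) (hq : coeffsIn q) :
    coeffsIn (p * q) := by
  intro d
  classical
  rw [MvPolynomial.coeff_mul]
  exact Subalgebra.sum_mem _ fun x _ => mul_mem (hp _) (hq _)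

lemma coeffsIn_pow {p : MvPolynomial (Fin m) ℂ} (hp : coeffsIn p) (n : ℕ) :
    coeffsIn (p ^ n) := by
  induction n with
  | zero => simpa using coeffsIn_one
  | succ n ih => rw [pow_succ]; exact coeffsIn_mul ih hp

lemma coeffsIn_ell (B : Matrix (Fin m) (Fin m) ℂ) (hB : ∀ i j, IsIntegral ℚ (B i j))
    (k : Fin m) : coeffsIn (∑ j, MvPolynomial.C (B k j) * MvPolynomial.X j) := by
  intro d
  classical
  rw [MvPolynomial.coeff_sum]
  refine Subalgebra.sum_mem _ fun j _ => ?_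
  rw [MvPolynomial.coeff_C_mul, MvPolynomial.coeff_X']
  refine mul_mem (hB k j) ?_
  split <;> simp [Subalgebra.one_mem, Subalgebra.zero_mem]

lemma coeffsIn_sigmaB_monX (B : Matrix (Fin m) (Fin m) ℂ)
    (hB : ∀ i j, IsIntegral ℚ (B i j)) (lam : Fin m → ℕ) :
    coeffsIn (sigmaB B (monX lam)) := by
  rw [sigmaB, monX, MvPolynomial.aeval_monomial, map_one, one_mul, Finsupp.prod]
  exact Finset.prod_induction _ coeffsIn (fun a b ha hb => coeffsIn_mul ha hb) coeffsIn_one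
    (fun i _ => coeffsIn_pow (coeffsIn_ell B hB i) _)

lemma PhiB_alg (B : Matrix (Fin m) (Fin m) ℂ) (hB : ∀ i j, IsAlgebraic ℚ (B i j))
    (f : (Fin m → ℕ) → ℂ) (hf : ∀ κ, IsAlgebraic ℚ (f κ)) (lam : Fin m → ℕ) :
    IsAlgebraic ℚ (PhiB B f lam) := by
  rw [PhiB_apply, pairL_apply, isAlgebraic_iff_isIntegral, ← mem_integralClosure_iff]
  exact Subalgebra.sum_mem _ fun μ _ => mul_mem
    ((coeffsIn_sigmaB_monX B (fun i j => isAlgebraic_iff_isIntegral.mp (hB i j)) lam) μ)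
    (mem_integralClosure_iff ℚ ℂ |>.mpr (isAlgebraic_iff_isIntegral.mp (hf ⇑μ)))

/-! ### Substitution applied to linear forms -/

lemma sigmaB_Lf (B : Matrix (Fin m) (Fin m) ℂ) (ζ : Fin m → ℂ) :
    sigmaB B (Lf ζ) = Lf (fun k => ∑ j, ζ j * B j k) := by
  rw [Lf, map_sum, Lf]
  simp only [map_mul, sigmaB, MvPolynomial.aeval_C, MvPolynomial.aeval_X, algebraMap_eq]
  simp only [Finset.mul_sum]
  rw [Finset.sum_comm]
  refine Finset.sum_congr rfl fun k _ => ?_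
  rw [map_sum MvPolynomial.C, Finset.sum_mul]
  exact Finset.sum_congr rfl fun j _ => by rw [← mul_assoc, ← MvPolynomial.C_mul]

end Aux

/-! ### Main theorem -/

theorem dimension_inequality_invariant_under_GLm_Qbar
    (m N : ℕ) (hm : 1 ≤ m) (hN : 1 ≤ N) (ξ : Fin m → ℂ)
    (hξ : LinIndepOverQbar m ξ)
    (A : Matrix (Fin m) (Fin m) ℂ) (hAalg : ∀ i j, IsAlgebraic ℚ (A i j))
    (hAinv : IsUnit A.det) (ρ : ℕ)
    (H : ∀ R : Submodule ℂ ((Fin m → ℕ) → ℂ), R ≤ OmegaSpace m N →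
      DefinedOverQbar R → Module.finrank ℂ ↥R = ρ → RatIneq m N ξ R) :
    ∀ R : Submodule ℂ ((Fin m → ℕ) → ℂ), R ≤ OmegaSpace m N →
      DefinedOverQbar R → Module.finrank ℂ ↥R = ρ →
      RatIneq m N (fun j => ∑ k : Fin m, A j k * ξ k) R := by
  classical
  intro R hRΩ hRQ hRρ
  set ξ' : Fin m → ℂ := fun j => ∑ k : Fin m, A j k * ξ k with hξ'def
  set B : Matrix (Fin m) (Fin m) ℂ := A⁻¹.transpose with hBdef
  set B' : Matrix (Fin m) (Fin m) ℂ := A.transpose with hB'def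
  have hBB' : B * B' = 1 := by
    rw [hBdef, hB'def, ← Matrix.transpose_mul, Matrix.mul_nonsing_inv A hAinv,
      Matrix.transpose_one]
  have hB'B : B' * B = 1 := by
    rw [hBdef, hB'def, ← Matrix.transpose_mul, Matrix.nonsing_inv_mul A hAinv,
      Matrix.transpose_one]
  have hcomp1 : PhiB B ∘ₗ PhiB B' = LinearMap.id := by
    rw [PhiB_comp, hBB', PhiB_one]
  have hcomp2 : PhiB B' ∘ₗ PhiB B = LinearMap.id := by
    rw [PhiB_comp, hB'B, PhiB_one]
  have hinj : Function.Injective (PhiB B) := by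
    have h : Function.LeftInverse (PhiB B') (PhiB B) := fun x => by
      rw [← LinearMap.comp_apply, hcomp2, LinearMap.id_apply]
    exact h.injective
  have hmapmap : ∀ P : Submodule ℂ ((Fin m → ℕ) → ℂ),
      (P.map (PhiB B')).map (PhiB B) = P := fun P => by
    rw [← Submodule.map_comp, hcomp1, Submodule.map_id]
  have hmapmap' : ∀ P : Submodule ℂ ((Fin m → ℕ) → ℂ),
      (P.map (PhiB B)).map (PhiB B') = P := fun P => by
    rw [← Submodule.map_comp, hcomp2, Submodule.map_id]
  -- substitution identities
  have hinvA : A⁻¹ * A = 1 := Matrix.nonsing_inv_mul A hAinv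
  have hsB : sigmaB B (Lf ξ') = Lf ξ := by
    rw [sigmaB_Lf]
    congr 1
    funext k
    have h1 : ∑ j, ξ' j * B j k = ∑ j, ∑ i, A⁻¹ k j * A j i * ξ i := by
      refine Finset.sum_congr rfl fun j _ => ?_
      rw [hBdef, Matrix.transpose_apply, hξ'def]
      rw [Finset.sum_mul]
      exact Finset.sum_congr rfl fun i _ => by ring
    rw [h1, Finset.sum_comm]
    have h2 : ∀ i : Fin m, ∑ j, A⁻¹ k j * A j i * ξ i = (A⁻¹ * A) k i * ξ i := by
      intro i
      rw [Matrix.mul_apply, Finset.sum_mul]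
    rw [Finset.sum_congr rfl fun i _ => h2 i, hinvA]
    simp [Matrix.one_apply, ite_mul, Finset.sum_ite_eq]
  have hsB' : sigmaB B' (Lf ξ) = Lf ξ' := by
    rw [sigmaB_Lf]
    congr 1
    funext k
    rw [hξ'def]
    exact Finset.sum_congr rfl fun j _ => by
      rw [hB'def, Matrix.transpose_apply]; ring
  -- transported spaces
  have hFeq : (Fspace m N ξ).map (PhiB B) = Fspace m N ξ' := by
    refine le_antisymm (PhiB_map_F_le B ξ ξ' hsB) ?_
    conv_lhs => rw [← hmapmap (Fspace m N ξ')]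
    exact Submodule.map_mono (PhiB_map_F_le B' ξ' ξ hsB')
  have hΩeq : (OmegaSpace m N).map (PhiB B) = OmegaSpace m N := by
    refine le_antisymm (PhiB_map_Omega_le B) ?_
    conv_lhs => rw [← hmapmap (OmegaSpace m N)]
    exact Submodule.map_mono (PhiB_map_Omega_le B')
  have hΩeq' : (OmegaSpace m N).map (PhiB B') = OmegaSpace m N := by
    refine le_antisymm (PhiB_map_Omega_le B') ?_
    conv_lhs => rw [← hmapmap' (OmegaSpace m N)]
    exact Submodule.map_mono (PhiB_map_Omega_le B)
  -- the transported subspace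
  set R₀ : Submodule ℂ ((Fin m → ℕ) → ℂ) := R.map (PhiB B') with hR₀def
  have hR : R₀.map (PhiB B) = R := hmapmap R
  have hR₀Ω : R₀ ≤ OmegaSpace m N :=
    le_trans (Submodule.map_mono hRΩ) (PhiB_map_Omega_le (N := N) B')
  have hB'alg : ∀ i j, IsAlgebraic ℚ (B' i j) := fun i j => hAalg j i
  have hR₀Q : DefinedOverQbar R₀ := by
    obtain ⟨s, hs, hsp⟩ := hRQ
    refine ⟨(PhiB B') '' s, ?_, ?_⟩
    · rintro _ ⟨v, hv, rfl⟩ κ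
      exact PhiB_alg B' hB'alg v (hs v hv) κ
    · rw [← Submodule.map_span, hsp]
  -- finrank transport
  have hfr : ∀ P : Submodule ℂ ((Fin m → ℕ) → ℂ),
      Module.finrank ℂ (P.map (PhiB B)) = Module.finrank ℂ P := fun P =>
    LinearEquiv.finrank_map_eq (LinearEquiv.ofLinear (PhiB B) (PhiB B') hcomp1 hcomp2) P
  have hrkR : Module.finrank ℂ R₀ = Module.finrank ℂ R := by
    rw [← hR, hfr]
  have hFR : (Fspace m N ξ ⊓ R₀).map (PhiB B) = Fspace m N ξ' ⊓ R := by
    rw [Submodule.map_inf _ hinj, hFeq, hR]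
  have hrkF : Module.finrank ℂ ↥(Fspace m N ξ' ⊓ R) = Module.finrank ℂ ↥(Fspace m N ξ ⊓ R₀) := by
    rw [← hFR, hfr]
  obtain ⟨hineq, hiff⟩ := H R₀ hR₀Ω hR₀Q (hrkR.trans hRρ)
  have hbotiff : R₀ = ⊥ ↔ R = ⊥ := by
    constructor
    · intro h
      rw [← hR, h, Submodule.map_bot]
    · intro h
      rw [hR₀def, h, Submodule.map_bot]
  have hΩiff : R₀ = OmegaSpace m N ↔ R = OmegaSpace m N := by
    constructor
    · intro h
      rw [← hR, h, hΩeq]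
    · intro h
      rw [hR₀def, h, hΩeq']
  constructor
  · rw [hrkF, ← hrkR]
    exact hineq
  · rw [hrkF, ← hrkR, hiff, hbotiff, hΩiff]

end
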